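/- arXiv:2504.20550 — 3 statements merged into one kernel-verified Lean document; each statement's English description precedes it below -/
import Mathlib

section
/- Let Ψ₁, ..., Ψ_m be i.i.d. Bernoulli random variables with success probability 1/M where 1/M < λ₂ ≤ 1 and M ≥ 2. Then Pr[(1/m)∑_{j=1}^m Ψⱼ > λ₂] < 2^{-m(λ₂ log₂ M - 1)}. -/
open MeasureTheory ProbabilityTheory

/-- Chernoff-type hashing collision bound: for i.i.d. Bernoulli(1/M)
variables with `1/M < λ₂ ≤ 1`, the probability that their average exceeds
`λ₂` is below `2^{-m(λ₂ log₂ M - 1)}`. -/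
theorem bernoulli_chernoff_hashing
    {Ω : Type*} [MeasurableSpace Ω] (μ : Measure Ω) [IsProbabilityMeasure μ]
    (m M : ℕ) (hM : 2 ≤ M) (lam2 : ℝ) (hlam2l : 1 / (M : ℝ) < lam2)
    (hlam2u : lam2 ≤ 1)
    (Ψ : Fin m → Ω → ℝ)
    (hmeas : ∀ j, Measurable (Ψ j))
    (hval : ∀ j ω, Ψ j ω = 0 ∨ Ψ j ω = 1)
    (hprob : ∀ j, μ {ω | Ψ j ω = 1} = ENNReal.ofReal (1 / (M : ℝ)))
    (hindep : iIndepFun Ψ μ) :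
    (μ {ω | lam2 < (1 / (m : ℝ)) * ∑ j, Ψ j ω}).toReal <
      2 ^ (-(m : ℝ) * (lam2 * Real.logb 2 M - 1)) := by
  have hM0 : (0 : ℝ) < M := by positivity
  have hM1 : (1 : ℝ) < M := by exact_mod_cast lt_of_lt_of_le one_lt_two (by exact_mod_cast hM)
  have hlam2pos : 0 < lam2 := lt_trans (by positivity) hlam2l
  -- handle m = 0
  rcases Nat.eq_zero_or_pos m with hm0 | hm
  · subst hm0
    have : {ω : Ω | lam2 < (1 / (0 : ℝ)) * ∑ j : Fin 0, Ψ j ω} = ∅ := by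
      ext ω; simp [not_lt, hlam2pos.le]
    simp only [Nat.cast_zero, this]
    simp only [measure_empty, ENNReal.toReal_zero, neg_zero, zero_mul]
    rw [Real.rpow_zero]; norm_num
  have hmpos : (0 : ℝ) < m := by exact_mod_cast hm
  set t : ℝ := Real.log M with ht_def
  have ht0 : 0 < t := Real.log_pos hM1
  have hexp_t : Real.exp t = M := Real.exp_log hM0
  -- pointwise: exp (t * Ψ j ω) = 1 + (M - 1) * Ψ j ω
  have hpt : ∀ j ω, Real.exp (t * Ψ j ω) = 1 + ((M : ℝ) - 1) * Ψ j ω := by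
    intro j ω
    rcases hval j ω with h | h <;> rw [h] <;> simp [hexp_t]
  -- integrability of Ψ j
  have hΨint : ∀ j, Integrable (Ψ j) μ := by
    intro j
    refine Integrable.mono' (integrable_const 1) (hmeas j).aestronglyMeasurable ?_
    filter_upwards with ω
    rcases hval j ω with h | h <;> rw [h] <;> norm_num
  -- integral of Ψ j
  have hΨmean : ∀ j, ∫ ω, Ψ j ω ∂μ = 1 / (M : ℝ) := by
    intro j
    have hA : MeasurableSet {ω | Ψ j ω = 1} := (hmeas j) (measurableSet_singleton 1)
    have heq : Ψ j = Set.indicator {ω | Ψ j ω = 1} (fun _ => (1 : ℝ)) := by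
      funext ω
      rcases hval j ω with h | h <;> simp [Set.indicator, Set.mem_setOf_eq, h]
    rw [heq, integral_indicator_const (1 : ℝ) hA, measureReal_def, hprob j]
    rw [ENNReal.toReal_ofReal (by positivity)]
    simp
  -- mgf of each Ψ j
  have hmgf : ∀ j, mgf (Ψ j) μ t = 2 - 1 / (M : ℝ) := by
    intro j
    unfold mgf
    calc ∫ ω, Real.exp (t * Ψ j ω) ∂μ
        = ∫ ω, (1 + ((M : ℝ) - 1) * Ψ j ω) ∂μ := by
          exact integral_congr_ae (Filter.Eventually.of_forall fun ω => hpt j ω)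
      _ = 2 - 1 / (M : ℝ) := by
          rw [integral_add (integrable_const 1) ((hΨint j).const_mul _),
            integral_const_mul, hΨmean j]
          simp only [integral_const, measureReal_def, measure_univ, ENNReal.toReal_one, smul_eq_mul, one_mul]
          field_simp
          ring
  -- integrability for Chernoff
  have hint : ∀ j, Integrable (fun ω => Real.exp (t * Ψ j ω)) μ := by
    intro j
    refine (integrable_congr (Filter.Eventually.of_forall fun ω => (hpt j ω))).mpr ?_
    exact (integrable_const 1).add ((hΨint j).const_mul _)
  have hXmeas : Measurable (∑ j, Ψ j) := by
    have := Finset.measurable_sum Finset.univ fun j (_ : j ∈ Finset.univ) => hmeas j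
    convert this using 1
    funext ω; simp [Finset.sum_apply]
  have hintX : Integrable (fun ω => Real.exp (t * (∑ j, Ψ j) ω)) μ := by
    refine Integrable.mono' (integrable_const (Real.exp (t * m)))
      ((hXmeas.const_mul t).exp.aestronglyMeasurable) ?_
    filter_upwards with ω
    rw [Real.norm_eq_abs, abs_of_pos (Real.exp_pos _), Real.exp_le_exp]
    have hsum : (∑ j, Ψ j) ω ≤ m := by
      rw [Finset.sum_apply]
      calc ∑ j, Ψ j ω ≤ ∑ _j : Fin m, (1 : ℝ) := by
            apply Finset.sum_le_sum
            intro j _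
            rcases hval j ω with h | h <;> rw [h] <;> norm_num
        _ = m := by simp
    nlinarith
  -- Chernoff
  have hcher := measure_ge_le_exp_mul_mgf (μ := μ) (X := ∑ j, Ψ j) (lam2 * m) ht0.le hintX
  rw [hindep.mgf_sum hmeas] at hcher
  have hprod : ∏ j : Fin m, mgf (Ψ j) μ t = (2 - 1 / (M : ℝ)) ^ m := by
    rw [Finset.prod_congr rfl fun j _ => hmgf j]; simp
  rw [hprod] at hcher
  -- set inclusion
  have hsub : {ω : Ω | lam2 < (1 / (m : ℝ)) * ∑ j, Ψ j ω} ⊆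
      {ω : Ω | lam2 * m ≤ (∑ j, Ψ j) ω} := by
    intro ω hω
    simp only [Set.mem_setOf_eq] at hω ⊢
    rw [Finset.sum_apply]
    rw [div_mul_eq_mul_div, lt_div_iff₀ hmpos, one_mul] at hω
    linarith
  have hmono : (μ {ω : Ω | lam2 < (1 / (m : ℝ)) * ∑ j, Ψ j ω}).toReal ≤
      (μ {ω : Ω | lam2 * m ≤ (∑ j, Ψ j) ω}).toReal :=
    ENNReal.toReal_mono (measure_ne_top _ _) (measure_mono hsub)
  -- final arithmetic
  have hbase : (0:ℝ) ≤ 2 - 1 / (M : ℝ) := by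
    have : 1 / (M : ℝ) ≤ 1 := by
      rw [div_le_one hM0]; exact hM1.le
    linarith
  have hstrict : (2 - 1 / (M : ℝ)) ^ m < 2 ^ m := by
    apply pow_lt_pow_left₀ _ hbase hm.ne'
    have : 0 < 1 / (M : ℝ) := by positivity
    linarith
  have hfinal : Real.exp (-t * (lam2 * m)) * (2 - 1 / (M : ℝ)) ^ m <
      2 ^ (-(m : ℝ) * (lam2 * Real.logb 2 M - 1)) := by
    have h1 : Real.exp (-t * (lam2 * m)) * (2 - 1 / (M : ℝ)) ^ m <
        Real.exp (-t * (lam2 * m)) * 2 ^ m :=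
      (mul_lt_mul_iff_right₀ (Real.exp_pos _)).mpr hstrict
    refine h1.trans_le (le_of_eq ?_)
    have hexp : Real.exp (-t * (lam2 * m)) = (M : ℝ) ^ (-(lam2 * (m : ℝ))) := by
      rw [Real.rpow_def_of_pos hM0, ht_def]
      ring_nf
    rw [hexp]
    have h2M : (2 : ℝ) ^ Real.logb 2 M = M :=
      Real.rpow_logb (by norm_num) (by norm_num) hM0
    have : ((M : ℝ)) ^ (-(lam2 * (m : ℝ))) =
        (2 : ℝ) ^ (Real.logb 2 M * (-(lam2 * (m : ℝ)))) := by
      rw [Real.rpow_mul (by norm_num : (0:ℝ) ≤ 2), h2M]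
    rw [this]
    rw [show ((2:ℝ) ^ m) = (2:ℝ) ^ ((m : ℝ)) by rw [Real.rpow_natCast]]
    rw [← Real.rpow_add (by norm_num : (0:ℝ) < 2)]
    congr 1
    ring
  calc (μ {ω : Ω | lam2 < (1 / (m : ℝ)) * ∑ j, Ψ j ω}).toReal
      ≤ Real.exp (-t * (lam2 * m)) * (2 - 1 / (M : ℝ)) ^ m := hmono.trans hcher
    _ < _ := hfinal
end

section
/- For λ → ∞, the entropy of a Poisson random variable with mean λ satisfies H(Pois(λ)) = (1/2)log₂(2πeλ) - 1/(12λ ln 2) + O(1/λ²); in particular H(Pois(λ)) - (1/2)log₂(2πeλ) → 0 as λ → ∞. -/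
open Filter Finset

/-- The Poisson pmf with mean `lam`. -/
noncomputable def poissonPMF (lam : ℝ) (y : ℕ) : ℝ :=
  Real.exp (-lam) * lam ^ y / (Nat.factorial y)

/-- Shannon entropy (in bits) of the Poisson distribution with mean `lam`. -/
noncomputable def poissonEntropy (lam : ℝ) : ℝ :=
  ∑' y : ℕ, -(poissonPMF lam y * Real.logb 2 (poissonPMF lam y))

namespace PE

lemma q_pos {lam : ℝ} (h : 0 < lam) (y : ℕ) : 0 < poissonPMF lam y := by
  unfold poissonPMF
  have : (0:ℝ) < (Nat.factorial y : ℝ) := by positivity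
  positivity

lemma hasSum_q {lam : ℝ} (h : 0 < lam) : HasSum (poissonPMF lam) 1 := by
  unfold poissonPMF
  apply (hasSum_mul_left_iff (Real.exp_ne_zero lam)).mp
  simp only [mul_one]
  have heq : (fun i ↦ Real.exp lam * (Real.exp (-lam) * lam ^ i / ↑(Nat.factorial i))) =
      fun i ↦ lam ^ i / ↑(Nat.factorial i) := by
    ext n
    rw [mul_div_assoc, Real.exp_neg, ← mul_assoc, ← div_eq_mul_inv, div_self (Real.exp_ne_zero lam),
      one_mul]
  rw [heq, Real.exp_eq_exp_ℝ]
  exact NormedSpace.expSeries_div_hasSum_exp lam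

lemma cast_factorial_add (n j : ℕ) :
    ((Nat.factorial (n + j) : ℝ)) = (Nat.factorial n : ℝ) * ∏ i ∈ range j, ((n:ℝ) + j - i) := by
  induction j with
  | zero => simp
  | succ j ih =>
    rw [Finset.prod_range_succ']
    have h1 : (∏ i ∈ range j, ((n:ℝ) + (j+1) - (i+1))) = ∏ i ∈ range j, ((n:ℝ) + j - i) := by
      apply Finset.prod_congr rfl; intro i _; ring
    have h2 : (n + (j+1)) = (n + j) + 1 := by ring
    rw [h2, Nat.factorial_succ]
    push_cast
    rw [ih]
    push_cast [h1]
    ring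

/-- falling-factorial sums: `E[Y(Y-1)...(Y-j+1)] = lam^j` -/
lemma hff {lam : ℝ} (h : 0 < lam) (j : ℕ) :
    HasSum (fun y : ℕ => poissonPMF lam y * ∏ i ∈ range j, ((y:ℝ) - i)) (lam ^ j) := by
  set f : ℕ → ℝ := fun y => poissonPMF lam y * ∏ i ∈ range j, ((y:ℝ) - i) with hf
  have hzero : ∀ i ∈ range j, f i = 0 := by
    intro i hi
    have : (∏ i' ∈ range j, ((i:ℝ) - i')) = 0 :=
      Finset.prod_eq_zero hi (by simp)
    simp [hf, this]
  have hkey : ∀ n : ℕ, f (n + j) = lam ^ j * poissonPMF lam n := by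
    intro n
    have hfac : ((Nat.factorial (n + j) : ℝ)) = (Nat.factorial n : ℝ) * ∏ i ∈ range j, ((n:ℝ) + j - i) :=
      cast_factorial_add n j
    have hprod : (∏ i ∈ range j, (((n + j : ℕ):ℝ) - i)) = ∏ i ∈ range j, ((n:ℝ) + j - i) := by
      apply Finset.prod_congr rfl; intro i _; push_cast; ring
    have hfn : (0:ℝ) < (Nat.factorial n : ℝ) := by positivity
    have hfnj : (0:ℝ) < (Nat.factorial (n + j) : ℝ) := by positivity
    have hP : (0:ℝ) < ∏ i ∈ range j, ((n:ℝ) + j - i) := by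
      have := hfac
      nlinarith [hfn, hfnj]
    simp only [hf, poissonPMF, hprod]
    rw [hfac]
    field_simp
    ring
  have h1 : HasSum (fun n => f (n + j)) (lam ^ j * 1) := by
    simp only [hkey]
    exact (hasSum_q h).mul_left _
  have h2 : HasSum (fun n => f (n + j)) (lam ^ j - ∑ i ∈ range j, f i) := by
    rw [Finset.sum_eq_zero hzero]
    simpa using h1
  exact (hasSum_nat_add_iff' j).mp h2

lemma hasSum_q_shift {lam : ℝ} (h : 0 < lam) (m : ℕ) :
    HasSum (fun y : ℕ => poissonPMF lam (y + m)) (1 - ∑ i ∈ range m, poissonPMF lam i) :=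
  (hasSum_nat_add_iff' m).mpr (hasSum_q h)

lemma hinv1 {lam : ℝ} (h : 0 < lam) :
    HasSum (fun y : ℕ => poissonPMF lam y / ((y:ℝ) + 1))
      ((1 - poissonPMF lam 0) / lam) := by
  have h1 := (hasSum_q_shift h 1).mul_left (1/lam)
  have heq : (fun y : ℕ => 1/lam * poissonPMF lam (y + 1)) =
      fun y : ℕ => poissonPMF lam y / ((y:ℝ) + 1) := by
    ext y
    have hy1 : ((y:ℝ) + 1) ≠ 0 := by positivity
    have hfy : (0:ℝ) < (Nat.factorial y : ℝ) := by positivity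
    simp only [poissonPMF, Nat.factorial_succ]
    push_cast
    field_simp
    ring
  rw [heq] at h1
  rw [show (1 - poissonPMF lam 0) / lam = 1/lam * (1 - ∑ i ∈ range 1, poissonPMF lam i) by
    simp [Finset.sum_range_succ]; ring]
  exact h1

lemma hinv2 {lam : ℝ} (h : 0 < lam) :
    HasSum (fun y : ℕ => poissonPMF lam y / (((y:ℝ) + 1) * ((y:ℝ) + 2)))
      ((1 - poissonPMF lam 0 - poissonPMF lam 1) / lam ^ 2) := by
  have h1 := (hasSum_q_shift h 2).mul_left (1/lam^2)
  have heq : (fun y : ℕ => 1/lam^2 * poissonPMF lam (y + 2)) =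
      fun y : ℕ => poissonPMF lam y / (((y:ℝ) + 1) * ((y:ℝ) + 2)) := by
    ext y
    have hy1 : ((y:ℝ) + 1) ≠ 0 := by positivity
    have hy2 : ((y:ℝ) + 2) ≠ 0 := by positivity
    have hfy : (0:ℝ) < (Nat.factorial y : ℝ) := by positivity
    have : y + 2 = (y + 1) + 1 := rfl
    simp only [poissonPMF, this, Nat.factorial_succ]
    push_cast
    field_simp
    ring
  rw [heq] at h1
  have : (1 - poissonPMF lam 0 - poissonPMF lam 1) / lam ^ 2
      = 1/lam^2 * (1 - ∑ i ∈ range 2, poissonPMF lam i) := by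
    simp [Finset.sum_range_succ]
    ring
  rw [this]
  exact h1

lemma hinv3 {lam : ℝ} (h : 0 < lam) :
    HasSum (fun y : ℕ => poissonPMF lam y / (((y:ℝ) + 1) * ((y:ℝ) + 2) * ((y:ℝ) + 3)))
      ((1 - poissonPMF lam 0 - poissonPMF lam 1 - poissonPMF lam 2) / lam ^ 3) := by
  have h1 := (hasSum_q_shift h 3).mul_left (1/lam^3)
  have heq : (fun y : ℕ => 1/lam^3 * poissonPMF lam (y + 3)) =
      fun y : ℕ => poissonPMF lam y / (((y:ℝ) + 1) * ((y:ℝ) + 2) * ((y:ℝ) + 3)) := by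
    ext y
    have hy1 : ((y:ℝ) + 1) ≠ 0 := by positivity
    have hy2 : ((y:ℝ) + 2) ≠ 0 := by positivity
    have hy3 : ((y:ℝ) + 3) ≠ 0 := by positivity
    have hfy : (0:ℝ) < (Nat.factorial y : ℝ) := by positivity
    have h3 : y + 3 = ((y + 1) + 1) + 1 := rfl
    simp only [poissonPMF, h3, Nat.factorial_succ]
    push_cast
    field_simp
    ring
  rw [heq] at h1
  have : (1 - poissonPMF lam 0 - poissonPMF lam 1 - poissonPMF lam 2) / lam ^ 3
      = 1/lam^3 * (1 - ∑ i ∈ range 3, poissonPMF lam i) := by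
    simp [Finset.sum_range_succ]
    ring
  rw [this]
  exact h1

noncomputable def aseq (n : ℕ) : ℝ := Real.log (Nat.factorial n) - ((n:ℝ) + 1/2) * Real.log n + n

noncomputable def sc : ℝ := Real.log (2 * Real.pi) / 2

lemma aseq_step (n : ℕ) :
    aseq n - aseq (n+1) = ((n:ℝ) + 1/2) * (Real.log ((n:ℝ)+1) - Real.log n) - 1 := by
  have h1 : Real.log (Nat.factorial (n+1)) = Real.log ((n:ℝ)+1) + Real.log (Nat.factorial n) := by
    rw [Nat.factorial_succ]
    push_cast
    rw [Real.log_mul (by positivity) (by positivity)]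
  simp only [aseq, h1]
  push_cast
  ring

lemma log_ratio_series {N : ℝ} (hN : 1 ≤ N) :
    |(N + 1/2) * (Real.log (N+1) - Real.log N) - 1 -
      ((1/(2*N+1))^2/3 + (1/(2*N+1))^4/5 + (1/(2*N+1))^6/7)| ≤
      (1/(2*N+1))^8/(1 - 1/(2*N+1)) := by
  set t : ℝ := 1/(2*N+1) with htdef
  have hN0 : (0:ℝ) < N := by linarith
  have h2N : (0:ℝ) < 2*N+1 := by linarith
  have ht0 : 0 < t := by positivity
  have ht3 : t ≤ 1/3 := by
    rw [htdef, div_le_div_iff₀ h2N (by norm_num)]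
    linarith
  have ht1 : |t| < 1 := by rw [abs_of_pos ht0]; linarith
  have htneg1 : |(-t)| < 1 := by rwa [abs_neg]
  have hp := Real.abs_log_sub_add_sum_range_le ht1 8
  have hm := Real.abs_log_sub_add_sum_range_le htneg1 8
  rw [abs_neg, abs_of_pos ht0] at hm
  rw [abs_of_pos ht0] at hp
  have hsum_p : (∑ i ∈ Finset.range 8, t ^ (i + 1) / ((i:ℝ) + 1)) =
      t + t^2/2 + t^3/3 + t^4/4 + t^5/5 + t^6/6 + t^7/7 + t^8/8 := by
    simp [Finset.sum_range_succ]
    norm_num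
  have hsum_m : (∑ i ∈ Finset.range 8, (-t) ^ (i + 1) / ((i:ℝ) + 1)) =
      -t + t^2/2 - t^3/3 + t^4/4 - t^5/5 + t^6/6 - t^7/7 + t^8/8 := by
    simp [Finset.sum_range_succ]
    norm_num
    ring
  rw [hsum_p] at hp
  rw [hsum_m] at hm
  set A : ℝ := t + t^2/2 + t^3/3 + t^4/4 + t^5/5 + t^6/6 + t^7/7 + t^8/8 + Real.log (1 - t) with hA
  set B : ℝ := -t + t^2/2 - t^3/3 + t^4/4 - t^5/5 + t^6/6 - t^7/7 + t^8/8 + Real.log (1 - -t) with hB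
  have hd : Real.log (1 - -t) - Real.log (1 - t) = Real.log (N+1) - Real.log N := by
    have e1 : 1 - -t = (2*N+2)/(2*N+1) := by rw [htdef]; field_simp; ring
    have e2 : 1 - t = (2*N)/(2*N+1) := by rw [htdef]; field_simp; ring
    rw [e1, e2, Real.log_div (by linarith) (by linarith),
      Real.log_div (by positivity) (by linarith),
      show (2*N+2 : ℝ) = 2*(N+1) by ring,
      Real.log_mul (by norm_num) (by linarith), Real.log_mul (by norm_num) (by linarith)]
    ring
  have ht2 : t ≠ 0 := ne_of_gt ht0
  have key : (N + 1/2) * (Real.log (N+1) - Real.log N) - 1 - (t^2/3 + t^4/5 + t^6/7)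
      = (1/(2*t)) * (B - A) := by
    rw [← hd]
    have hhalf : N + 1/2 = 1/(2*t) := by rw [htdef]; field_simp
    rw [hhalf, hB, hA]
    field_simp
    ring
  have h1t : (0:ℝ) < 1 - t := by linarith
  clear htdef
  clear_value t
  rw [key, abs_mul, abs_of_pos (by positivity : (0:ℝ) < 1/(2*t))]
  have habs : |B - A| ≤ 2 * (t^9/(1-t)) := by
    calc |B - A| ≤ |B| + |A| := abs_sub _ _
    _ ≤ t^9/(1-t) + t^9/(1-t) := add_le_add hm hp
    _ = 2 * (t^9/(1-t)) := by ring
  calc (1/(2*t)) * |B - A| ≤ (1/(2*t)) * (2 * (t^9/(1-t))) := by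
        apply mul_le_mul_of_nonneg_left habs (by positivity)
  _ = t^8/(1-t) := by
        have hne : (1:ℝ) - t ≠ 0 := h1t.ne'
        field_simp
lemma tineq_upper {t : ℝ} (ht0 : 0 < t) (ht3 : t ≤ 1/3) :
    t^2/3 + t^4/5 + t^6/7 + t^8/(1-t) ≤ t^2/(3*(1-t^2)) := by
  have h1 : (0:ℝ) < 1 - t := by linarith
  have h2 : (0:ℝ) < 1 - t^2 := by nlinarith
  rw [← sub_nonneg]
  have key : t^2/(3*(1-t^2)) - (t^2/3 + t^4/5 + t^6/7 + t^8/(1-t))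
      = t^4*(14 + 6*t^2 - 90*t^4 - 105*t^5) / (105*(1-t^2)) := by
    field_simp
    ring
  rw [key]
  apply div_nonneg _ (by positivity)
  have hb : ∀ k : ℕ, t^k ≤ (1/3:ℝ)^k := fun k => pow_le_pow_left₀ ht0.le ht3 k
  have h4 := hb 4; have h5 := hb 5
  norm_num at h4 h5
  nlinarith [pow_pos ht0 4, sq_nonneg t]

lemma tineq_lower {t : ℝ} (ht0 : 0 < t) (ht3 : t ≤ 1/3) :
    t^2/(3*((1+t)*(1+3*t))) ≤ t^2/3 + t^4/5 + t^6/7 - t^8/(1-t) := by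
  have h1 : (0:ℝ) < 1 - t := by linarith
  have h2 : (0:ℝ) < 1 - t^2 := by nlinarith
  have h3 : (0:ℝ) < 1 + t := by linarith
  have h4 : (0:ℝ) < 1 + 3*t := by linarith
  rw [← sub_nonneg]
  have key : (t^2/3 + t^4/5 + t^6/7 - t^8/(1-t)) - t^2/(3*((1+t)*(1+3*t)))
      = t^3*(140 + 126*t - 56*t^2 - 48*t^3 - 24*t^4 - 138*t^5 - 585*t^6 - 780*t^7 - 315*t^8)
        / (105*(1-t^2)*((1+t)*(1+3*t))) := by
    field_simp
    ring
  rw [key]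
  apply div_nonneg _ (by positivity)
  have hb : ∀ k : ℕ, t^k ≤ (1/3:ℝ)^k := fun k => pow_le_pow_left₀ ht0.le ht3 k
  have g2 := hb 2; have g3 := hb 3; have g4 := hb 4; have g5 := hb 5
  have g6 := hb 6; have g7 := hb 7; have g8 := hb 8
  norm_num at g2 g3 g4 g5 g6 g7 g8
  nlinarith [pow_pos ht0 3, pow_pos ht0 2]

lemma step_upper {n : ℕ} (hn : 1 ≤ n) :
    aseq n - aseq (n+1) ≤ 1/(12*(n:ℝ)*((n:ℝ)+1)) := by
  have hN : (1:ℝ) ≤ (n:ℝ) := by exact_mod_cast hn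
  set N : ℝ := (n:ℝ)
  have hN0 : (0:ℝ) < N := by linarith
  have hlrs := log_ratio_series hN
  set t : ℝ := 1/(2*N+1) with htdef
  have ht0 : 0 < t := by positivity
  have ht3 : t ≤ 1/3 := by
    rw [htdef, div_le_div_iff₀ (by linarith) (by norm_num)]; linarith
  have hmul : (1/(12*N*(N+1))) * (3*(1-t^2)) = t^2 := by
    rw [htdef]; field_simp; ring
  have hpos : (0:ℝ) < 3*(1-t^2) := by nlinarith
  have heq : t^2/(3*(1-t^2)) = 1/(12*N*(N+1)) := by
    rw [div_eq_iff hpos.ne']; exact hmul.symm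
  have hstep : aseq n - aseq (n+1) = (N + 1/2) * (Real.log (N+1) - Real.log N) - 1 :=
    aseq_step n
  rw [hstep, ← heq]
  have h1 := (abs_le.mp hlrs).2
  have := tineq_upper ht0 ht3
  linarith

lemma step_lower {n : ℕ} (hn : 1 ≤ n) :
    1/(12*((n:ℝ)+1)*((n:ℝ)+2)) ≤ aseq n - aseq (n+1) := by
  have hN : (1:ℝ) ≤ (n:ℝ) := by exact_mod_cast hn
  set N : ℝ := (n:ℝ)
  have hN0 : (0:ℝ) < N := by linarith
  have hlrs := log_ratio_series hN
  set t : ℝ := 1/(2*N+1) with htdef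
  have ht0 : 0 < t := by positivity
  have ht3 : t ≤ 1/3 := by
    rw [htdef, div_le_div_iff₀ (by linarith) (by norm_num)]; linarith
  have hmul : (1/(12*(N+1)*(N+2))) * (3*((1+t)*(1+3*t))) = t^2 := by
    rw [htdef]; field_simp; ring
  have hpos : (0:ℝ) < 3*((1+t)*(1+3*t)) := by positivity
  have heq : t^2/(3*((1+t)*(1+3*t))) = 1/(12*(N+1)*(N+2)) := by
    rw [div_eq_iff hpos.ne']; exact hmul.symm
  have hstep : aseq n - aseq (n+1) = (N + 1/2) * (Real.log (N+1) - Real.log N) - 1 :=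
    aseq_step n
  rw [hstep, ← heq]
  have h1 := (abs_le.mp hlrs).1
  have := tineq_lower ht0 ht3
  linarith

lemma aseq_tendsto : Filter.Tendsto aseq Filter.atTop (nhds sc) := by
  have hpi : (0:ℝ) < Real.sqrt Real.pi := Real.sqrt_pos.mpr Real.pi_pos
  have hlog : Filter.Tendsto (fun n => Real.log (Stirling.stirlingSeq n)) Filter.atTop
      (nhds (Real.log (Real.sqrt Real.pi))) :=
    ((Real.continuousAt_log hpi.ne').tendsto).comp Stirling.tendsto_stirlingSeq_sqrt_pi
  have key : ∀ n : ℕ, 1 ≤ n →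
      aseq n = Real.log (Stirling.stirlingSeq n) + Real.log 2 / 2 := by
    intro n hn
    have hN : (1:ℝ) ≤ (n:ℝ) := by exact_mod_cast hn
    have hN0 : (0:ℝ) < (n:ℝ) := by linarith
    have hfac : (0:ℝ) < (Nat.factorial n : ℝ) := by positivity
    have hsq : (0:ℝ) < Real.sqrt (2*(n:ℝ)) := Real.sqrt_pos.mpr (by linarith)
    have hpow : (0:ℝ) < ((n:ℝ) / Real.exp 1)^n := by positivity
    rw [Stirling.stirlingSeq]
    rw [Real.log_div hfac.ne' (by positivity), Real.log_mul hsq.ne' hpow.ne',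
      Real.log_pow, Real.log_div hN0.ne' (Real.exp_ne_zero 1), Real.log_exp,
      Real.log_sqrt (by linarith), Real.log_mul (by norm_num) hN0.ne']
    simp only [aseq]
    push_cast
    ring
  have h2 : Filter.Tendsto (fun n : ℕ => Real.log (Stirling.stirlingSeq n) + Real.log 2 / 2)
      Filter.atTop (nhds (Real.log (Real.sqrt Real.pi) + Real.log 2 / 2)) :=
    hlog.add_const _
  have heq : (fun n : ℕ => Real.log (Stirling.stirlingSeq n) + Real.log 2 / 2)
      =ᶠ[Filter.atTop] aseq := by
    filter_upwards [Filter.eventually_ge_atTop 1] with n hn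
    exact (key n hn).symm
  have h3 := h2.congr' heq
  have hval : Real.log (Real.sqrt Real.pi) + Real.log 2 / 2 = sc := by
    rw [Real.log_sqrt Real.pi_pos.le, sc, Real.log_mul (by norm_num) Real.pi_ne_zero]
    ring
  rwa [hval] at h3

lemma tendsto_inv_shift (c : ℝ) (hc : 0 < c) :
    Filter.Tendsto (fun k : ℕ => 1/(12*((k:ℝ)+c))) Filter.atTop (nhds 0) := by
  have hb : Filter.Tendsto (fun k : ℕ => 12*((k:ℝ)+c)) Filter.atTop Filter.atTop := by
    apply Filter.Tendsto.const_mul_atTop (by norm_num : (0:ℝ) < 12)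
    exact tendsto_atTop_add_const_right _ c tendsto_natCast_atTop_atTop
  have := hb.inv_tendsto_atTop
  exact this.congr (fun k => by simp [Pi.inv_apply, one_div])

lemma aseq_bounds {n : ℕ} (hn : 1 ≤ n) :
    1/(12*((n:ℝ)+1)) ≤ aseq n - sc ∧ aseq n - sc ≤ 1/(12*(n:ℝ)) := by
  obtain ⟨k, rfl⟩ : ∃ k, n = k + 1 := ⟨n-1, (Nat.succ_pred_eq_of_pos hn).symm⟩
  constructor
  · set v : ℕ → ℝ := fun k => aseq (k+1) - 1/(12*((k:ℝ)+2)) with hv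
    have hanti : Antitone v := by
      apply antitone_nat_of_succ_le
      intro m
      have hstep := step_lower (n := m+1) (by omega)
      have heq : 1/(12*((m:ℝ)+2)) - 1/(12*((m:ℝ)+1+2)) = 1/(12*((m:ℝ)+1+1)*((m:ℝ)+1+2)) := by
        have h2 : ((m:ℝ)+2) ≠ 0 := by positivity
        have h3 : ((m:ℝ)+1+2) ≠ 0 := by positivity
        field_simp
        ring
      simp only [hv]
      push_cast
      push_cast at hstep
      linarith
    have htend : Filter.Tendsto v Filter.atTop (nhds sc) := by
      have h1 : Filter.Tendsto (fun k : ℕ => aseq (k+1)) Filter.atTop (nhds sc) :=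
        aseq_tendsto.comp (Filter.tendsto_add_atTop_nat 1)
      have h2 := tendsto_inv_shift 2 (by norm_num)
      have h3 := h1.sub h2
      rw [sub_zero] at h3
      exact h3
    have hle := hanti.le_of_tendsto htend k
    simp only [hv] at hle
    have hc : ((k:ℝ)+1+1) = (k:ℝ)+2 := by ring
    push_cast
    rw [hc]
    linarith
  · set u : ℕ → ℝ := fun k => aseq (k+1) - 1/(12*((k:ℝ)+1)) with hu
    have hmono : Monotone u := by
      apply monotone_nat_of_le_succ
      intro m
      have hstep := step_upper (n := m+1) (by omega)
      have heq : 1/(12*((m:ℝ)+1)) - 1/(12*((m:ℝ)+1+1)) = 1/(12*((m:ℝ)+1)*((m:ℝ)+1+1)) := by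
        have h2 : ((m:ℝ)+1) ≠ 0 := by positivity
        have h3 : ((m:ℝ)+1+1) ≠ 0 := by positivity
        field_simp
        ring
      simp only [hu]
      push_cast
      push_cast at hstep
      linarith
    have htend : Filter.Tendsto u Filter.atTop (nhds sc) := by
      have h1 : Filter.Tendsto (fun k : ℕ => aseq (k+1)) Filter.atTop (nhds sc) :=
        aseq_tendsto.comp (Filter.tendsto_add_atTop_nat 1)
      have h2 := tendsto_inv_shift 1 (by norm_num)
      have h3 := h1.sub h2
      rw [sub_zero] at h3
      exact h3
    have hle := hmono.ge_of_tendsto htend k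
    simp only [hu] at hle
    push_cast
    linarith

lemma stirling_err {n : ℕ} (hn : 1 ≤ n) :
    |Real.log (Nat.factorial n) - (((n:ℝ)+1/2)*Real.log n - n + sc + 1/(12*n))| ≤
      1/(12*(n:ℝ)*((n:ℝ)+1)) := by
  have hN : (1:ℝ) ≤ (n:ℝ) := by exact_mod_cast hn
  obtain ⟨h1, h2⟩ := aseq_bounds hn
  have heq : 1/(12*((n:ℝ)+1)) - 1/(12*(n:ℝ)) = -(1/(12*(n:ℝ)*((n:ℝ)+1))) := by
    have ha : ((n:ℝ)) ≠ 0 := by positivity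
    have hb : ((n:ℝ)+1) ≠ 0 := by positivity
    field_simp
    ring
  have hx : Real.log (Nat.factorial n) - (((n:ℝ)+1/2)*Real.log n - n + sc + 1/(12*n))
      = (aseq n - sc) - 1/(12*(n:ℝ)) := by
    simp only [aseq]; ring
  rw [hx, abs_le]
  constructor
  · linarith
  · have : (0:ℝ) < 1/(12*(n:ℝ)*((n:ℝ)+1)) := by positivity
    linarith
noncomputable def P5 (t : ℝ) : ℝ := t - t^2/2 + t^3/3 - t^4/4 + t^5/5

noncomputable def Mfun (lam : ℝ) (y : ℕ) : ℝ :=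
  ((y:ℝ)+1/2) * (Real.log lam + P5 (((y:ℝ)-lam)/lam)) - y + sc
  + (1/12)*(1/((y:ℝ)+1)) + (1/12)*(1/(((y:ℝ)+1)*((y:ℝ)+2)))

noncomputable def psi (lam : ℝ) (y : ℕ) : ℝ :=
  1/(2*((y:ℝ)+1)*((y:ℝ)+2)) + 1/(((y:ℝ)+1)*((y:ℝ)+2)*((y:ℝ)+3))
  + 4*lam*(((y:ℝ)-lam)/lam)^6 + 60000*lam^2*(((y:ℝ)-lam)/lam)^8

lemma log_taylor {t : ℝ} (h : |t| ≤ 1/2) :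
    |Real.log (1+t) - P5 t| ≤ 2*|t|^6 := by
  have h1 : |(-t)| < 1 := by rw [abs_neg]; linarith [abs_nonneg t]
  have hp := Real.abs_log_sub_add_sum_range_le h1 5
  have hsum : (∑ i ∈ Finset.range 5, (-t) ^ (i + 1) / ((i:ℝ) + 1)) = -P5 t := by
    simp [Finset.sum_range_succ, P5]
    ring
  rw [hsum, abs_neg] at hp
  have h2 : 1 - -t = 1 + t := by ring
  rw [h2] at hp
  have h3 : |(-P5 t) + Real.log (1+t)| = |Real.log (1+t) - P5 t| := by
    congr 1; ring
  rw [h3] at hp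
  have h4 : |t|^(5+1)/(1 - |t|) ≤ 2*|t|^6 := by
    rw [div_le_iff₀ (by linarith [abs_nonneg t])]
    have := abs_nonneg t
    have h6 : (0:ℝ) ≤ |t|^6 := by positivity
    have h7 : |t|^(5+1) = |t|^6 := by norm_num
    rw [h7]
    nlinarith [mul_nonneg h6 (show (0:ℝ) ≤ 1 - 2*|t| by linarith)]
  calc |Real.log (1+t) - P5 t| ≤ |t|^(5+1)/(1-|t|) := hp
  _ ≤ 2*|t|^6 := h4

lemma sc_bounds : 0 ≤ sc ∧ sc ≤ 3 := by
  constructor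
  · exact div_nonneg (Real.log_nonneg (by nlinarith [Real.pi_gt_three])) (by norm_num)
  · have h1 : Real.log (2*Real.pi) ≤ 2*Real.pi - 1 :=
      Real.log_le_sub_one_of_pos (by positivity)
    have := Real.pi_lt_d2
    simp only [sc]
    nlinarith


lemma absP5_le (t : ℝ) : |P5 t| ≤ |t| + |t|^2/2 + |t|^3/3 + |t|^4/4 + |t|^5/5 := by
  have habs_pow : ∀ k : ℕ, |t^k| = |t|^k := fun k => by rw [abs_pow]
  have a2 : |t^2/2| = |t|^2/2 := by rw [abs_div, habs_pow 2]; norm_num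
  have a3 : |t^3/3| = |t|^3/3 := by rw [abs_div, habs_pow 3]; norm_num
  have a4 : |t^4/4| = |t|^4/4 := by rw [abs_div, habs_pow 4]; norm_num
  have a5 : |t^5/5| = |t|^5/5 := by rw [abs_div, habs_pow 5]; norm_num
  simp only [P5]
  calc |t - t^2/2 + t^3/3 - t^4/4 + t^5/5|
      ≤ |t - t^2/2 + t^3/3 - t^4/4| + |t^5/5| := abs_add_le _ _
  _ ≤ (|t - t^2/2 + t^3/3| + |t^4/4|) + |t^5/5| := by
      gcongr; exact abs_sub _ _
  _ ≤ ((|t - t^2/2| + |t^3/3|) + |t^4/4|) + |t^5/5| := by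
      gcongr; exact abs_add_le _ _
  _ ≤ (((|t| + |t^2/2|) + |t^3/3|) + |t^4/4|) + |t^5/5| := by
      gcongr; exact abs_sub _ _
  _ = |t| + |t|^2/2 + |t|^3/3 + |t|^4/4 + |t|^5/5 := by
      rw [a2, a3, a4, a5]

lemma poly_tail {s : ℝ} (hs12 : 1/2 < s) (hs0 : 0 ≤ s) :
    2*(1+s)*(2 + 2*s + s^2 + s^3 + s^4 + s^5) ≤ 60000*s^8 := by
  have h2s : (1:ℝ) ≤ 2*s := by linarith
  have hq : ∀ k : ℕ, (1:ℝ) ≤ (2*s)^k := by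
    intro k
    have := pow_le_pow_left₀ (by norm_num : (0:ℝ) ≤ 1) h2s k
    rwa [one_pow] at this
  have q0 : (1:ℝ) ≤ 256*s^8 := by nlinarith [hq 8]
  have q1 : s ≤ 128*s^8 := by
    nlinarith [mul_nonneg (pow_nonneg hs0 1) (sub_nonneg.mpr (hq 7))]
  have q2 : s^2 ≤ 64*s^8 := by
    nlinarith [mul_nonneg (pow_nonneg hs0 2) (sub_nonneg.mpr (hq 6))]
  have q3 : s^3 ≤ 32*s^8 := by
    nlinarith [mul_nonneg (pow_nonneg hs0 3) (sub_nonneg.mpr (hq 5))]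
  have q4 : s^4 ≤ 16*s^8 := by
    nlinarith [mul_nonneg (pow_nonneg hs0 4) (sub_nonneg.mpr (hq 4))]
  have q5 : s^5 ≤ 8*s^8 := by
    nlinarith [mul_nonneg (pow_nonneg hs0 5) (sub_nonneg.mpr (hq 3))]
  have q6 : s^6 ≤ 4*s^8 := by
    nlinarith [mul_nonneg (pow_nonneg hs0 6) (sub_nonneg.mpr (hq 2))]
  nlinarith only [q0, q1, q2, q3, q4, q5, q6, hs0]

set_option maxHeartbeats 1000000 in
lemma pointwise_err {lam : ℝ} (hlam : 1 ≤ lam) (y : ℕ) :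
    |Real.log (Nat.factorial y) - Mfun lam y| ≤ psi lam y := by
  have hlam0 : (0:ℝ) < lam := by linarith
  obtain ⟨hsc0, hsc3⟩ := sc_bounds
  rcases Nat.eq_zero_or_pos y with hy0 | hy1
  · subst hy0
    have htt : -lam/lam = -1 := by field_simp
    have hM : Mfun lam 0 = (1/2) * (Real.log lam + P5 (-1)) + sc + 1/12 + 1/24 := by
      simp only [Mfun, Nat.cast_zero, zero_sub, htt]
      norm_num
    have hP5 : P5 (-1) = -137/60 := by norm_num [P5]
    have hlog0 : 0 ≤ Real.log lam := Real.log_nonneg hlam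
    have hlogl : Real.log lam ≤ lam - 1 := Real.log_le_sub_one_of_pos hlam0
    have hpsi : psi lam 0 = 1/4 + 1/6 + 4*lam + 60000*lam^2 := by
      simp only [psi, Nat.cast_zero, zero_sub, htt]
      norm_num
    simp only [Nat.factorial_zero, Nat.cast_one, Real.log_one]
    rw [hM, hP5, hpsi, abs_le]
    constructor <;> nlinarith
  · have hy1R : (1:ℝ) ≤ (y:ℝ) := by exact_mod_cast hy1
    have hyR0 : (0:ℝ) < (y:ℝ) := by linarith
    set t : ℝ := ((y:ℝ) - lam)/lam with htdef
    clear_value t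
    have hyt : (y:ℝ) = lam * (1 + t) := by rw [htdef]; field_simp; ring
    have hst := stirling_err hy1
    have hE3 : 1/(12*(y:ℝ)) - (1/12)*(1/((y:ℝ)+1)) - (1/12)*(1/(((y:ℝ)+1)*((y:ℝ)+2)))
        = (1/6) * (1/((y:ℝ)*((y:ℝ)+1)*((y:ℝ)+2))) := by
      field_simp
      ring
    have hdecomp : Real.log (Nat.factorial y) - Mfun lam y =
        (Real.log (Nat.factorial y) - (((y:ℝ)+1/2)*Real.log y - y + sc + 1/(12*y)))
        + ((y:ℝ)+1/2) * (Real.log y - Real.log lam - P5 t)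
        + (1/(12*(y:ℝ)) - (1/12)*(1/((y:ℝ)+1)) - (1/12)*(1/(((y:ℝ)+1)*((y:ℝ)+2)))) := by
      simp only [Mfun, htdef]
      ring
    have hlog1t : Real.log (1+t) = Real.log y - Real.log lam := by
      have h1t : 1 + t = (y:ℝ)/lam := by rw [htdef]; field_simp; ring
      rw [h1t, Real.log_div hyR0.ne' hlam0.ne']
    have hb1 : 1/(12*(y:ℝ)*((y:ℝ)+1)) ≤ 1/(2*((y:ℝ)+1)*((y:ℝ)+2)) := by
      rw [div_le_div_iff₀ (by positivity) (by positivity)]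
      nlinarith
    have hb3 : (1/6) * (1/((y:ℝ)*((y:ℝ)+1)*((y:ℝ)+2))) ≤
        1/(((y:ℝ)+1)*((y:ℝ)+2)*((y:ℝ)+3)) := by
      have hA : (1:ℝ)/6 * (1/((y:ℝ)*((y:ℝ)+1)*((y:ℝ)+2))) =
          1/(6*((y:ℝ)*((y:ℝ)+1)*((y:ℝ)+2))) := by
        rw [div_mul_div_comm]
        norm_num
      rw [hA, div_le_div_iff₀ (by positivity) (by positivity)]
      nlinarith [mul_nonneg (mul_nonneg (by linarith : (0:ℝ) ≤ (y:ℝ)+1)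
        (by linarith : (0:ℝ) ≤ (y:ℝ)+2)) (by linarith : (0:ℝ) ≤ 5*(y:ℝ)-3)]
    have ht6 : |t|^6 = t^6 := by rw [← abs_pow, abs_of_nonneg (by positivity)]
    have ht8 : |t|^8 = t^8 := by rw [← abs_pow, abs_of_nonneg (by positivity)]
    have hb2 : ((y:ℝ)+1/2) * |Real.log y - Real.log lam - P5 t| ≤
        4*lam*t^6 + 60000*lam^2*t^8 := by
      rcases le_or_gt |t| (1/2) with hts | hts
      · have hR := log_taylor hts
        rw [hlog1t] at hR
        have htle : t ≤ 1/2 := (abs_le.mp hts).2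
        have hy2 : (y:ℝ) + 1/2 ≤ 2*lam := by nlinarith only [hyt, htle, hlam]
        have h0R : 0 ≤ |Real.log y - Real.log lam - P5 t| := abs_nonneg _
        have ht8' : (0:ℝ) ≤ 60000*lam^2*t^8 := by positivity
        have hmm := mul_le_mul hy2 hR h0R (by positivity : (0:ℝ) ≤ 2*lam)
        rw [ht6] at hmm
        have hl4 : 2*lam*(2*t^6) = 4*lam*t^6 := by ring
        rw [hl4] at hmm
        linarith only [hmm, ht8']
      · set s : ℝ := |t| with hsdef
        clear_value s
        have hs12 : 1/2 < s := hts
        have hs0 : (0:ℝ) ≤ s := by rw [hsdef]; exact abs_nonneg t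
        have hts' : t ≤ s := by rw [hsdef]; exact le_abs_self t
        have hts'' : -s ≤ t := by rw [hsdef]; exact neg_abs_le t
        have hlogy0 : 0 ≤ Real.log y := Real.log_nonneg hy1R
        have hlogy : Real.log y ≤ (y:ℝ) - 1 := Real.log_le_sub_one_of_pos hyR0
        have hlogl0 : 0 ≤ Real.log lam := Real.log_nonneg hlam
        have hlogl : Real.log lam ≤ lam - 1 := Real.log_le_sub_one_of_pos hlam0
        have habsP : |P5 t| ≤ s + s^2/2 + s^3/3 + s^4/4 + s^5/5 := by
          have := absP5_le t
          rw [← hsdef] at this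
          exact this
        have hRb : |Real.log y - Real.log lam - P5 t| ≤
            lam*(2 + 2*s + s^2 + s^3 + s^4 + s^5) := by
          have h1 : |Real.log y - Real.log lam - P5 t| ≤
              |Real.log y - Real.log lam| + |P5 t| := abs_sub _ _
          have h2 : |Real.log y - Real.log lam| ≤ Real.log y + Real.log lam := by
            rw [abs_sub_comm]
            calc |Real.log lam - Real.log y| ≤ |Real.log lam| + |Real.log y| := abs_sub _ _
            _ = Real.log lam + Real.log y := by
                rw [abs_of_nonneg hlogl0, abs_of_nonneg hlogy0]
            _ = Real.log y + Real.log lam := by ring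
          have hyb : (y:ℝ) ≤ lam*(1+s) := by
            nlinarith only [hyt, hts', hlam0]
          nlinarith only [h1, h2, habsP, hyb, hlogy, hlogl, hlam, hs0,
            pow_nonneg hs0 2, pow_nonneg hs0 3, pow_nonneg hs0 4, pow_nonneg hs0 5,
            mul_nonneg (by linarith : (0:ℝ) ≤ lam - 1) (pow_nonneg hs0 2),
            mul_nonneg (by linarith : (0:ℝ) ≤ lam - 1) (pow_nonneg hs0 3),
            mul_nonneg (by linarith : (0:ℝ) ≤ lam - 1) (pow_nonneg hs0 4),
            mul_nonneg (by linarith : (0:ℝ) ≤ lam - 1) (pow_nonneg hs0 5),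
            mul_nonneg (by linarith : (0:ℝ) ≤ lam - 1) hs0]
        have hyhalf : (y:ℝ)+1/2 ≤ 2*lam*(1+s) := by
          nlinarith only [hyt, hts', hlam0, hlam, hs0,
            mul_nonneg hlam0.le (by linarith : (0:ℝ) ≤ s - t)]
        have hpoly := poly_tail hs12 hs0
        have hprod := mul_le_mul hyhalf hRb (abs_nonneg _)
          (by positivity : (0:ℝ) ≤ 2*lam*(1+s))
        have hs8 : s^8 = t^8 := by rw [hsdef]; rw [← abs_pow, abs_of_nonneg (by positivity)]
        have ht6' : (0:ℝ) ≤ 4*lam*t^6 := by positivity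
        have hlam2 : (0:ℝ) ≤ lam^2 := by positivity
        have hfin := mul_le_mul_of_nonneg_left hpoly hlam2
        nlinarith only [hprod, hfin, hs8, ht6', hlam0]
    -- final assembly
    rw [hdecomp]
    have htri := abs_add_three
        (Real.log (Nat.factorial y) - (((y:ℝ)+1/2)*Real.log y - y + sc + 1/(12*y)))
        (((y:ℝ)+1/2) * (Real.log y - Real.log lam - P5 t))
        (1/(12*(y:ℝ)) - (1/12)*(1/((y:ℝ)+1)) - (1/12)*(1/(((y:ℝ)+1)*((y:ℝ)+2))))
    have habs2 : |((y:ℝ)+1/2) * (Real.log y - Real.log lam - P5 t)| =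
        ((y:ℝ)+1/2) * |Real.log y - Real.log lam - P5 t| := by
      rw [abs_mul, abs_of_nonneg (by positivity : (0:ℝ) ≤ (y:ℝ)+1/2)]
    have habs3 : |1/(12*(y:ℝ)) - (1/12)*(1/((y:ℝ)+1)) - (1/12)*(1/(((y:ℝ)+1)*((y:ℝ)+2)))| =
        (1/6) * (1/((y:ℝ)*((y:ℝ)+1)*((y:ℝ)+2))) := by
      rw [hE3, abs_of_nonneg (by positivity)]
    rw [habs2, habs3] at htri
    simp only [psi]
    rw [← htdef]
    linarith only [htri, hst, hb1, hb2, hb3]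
lemma hmu6 {lam : ℝ} (h : 0 < lam) :
    HasSum (fun y : ℕ => poissonPMF lam y * (((y:ℝ) - lam)^6))
      (15*lam^3 + 25*lam^2 + lam) := by
  have hl := h.ne'
  have h0 := (hff h 0).mul_left (1*lam^6)
  have h1 := (hff h 1).mul_left (-6*lam^5 + 15*lam^4 - 20*lam^3 + 15*lam^2 - 6*lam + 1)
  have h2 := (hff h 2).mul_left (15*lam^4 - 60*lam^3 + 105*lam^2 - 90*lam + 31)
  have h3 := (hff h 3).mul_left (-20*lam^3 + 90*lam^2 - 150*lam + 90)
  have h4 := (hff h 4).mul_left (15*lam^2 - 60*lam + 65)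
  have h5 := (hff h 5).mul_left (-6*lam + 15)
  have h6 := (hff h 6).mul_left (1)
  have H := ((((((h0.add h1).add h2).add h3).add h4).add h5).add h6)
  convert H using 1
  · rfl
  · funext y
    simp only [Finset.prod_range_succ, Finset.prod_range_zero, one_mul]
    push_cast
    field_simp
    ring
  · field_simp
    ring

lemma hmu8 {lam : ℝ} (h : 0 < lam) :
    HasSum (fun y : ℕ => poissonPMF lam y * (((y:ℝ) - lam)^8))
      (105*lam^4 + 490*lam^3 + 119*lam^2 + lam) := by
  have hl := h.ne'
  have h0 := (hff h 0).mul_left (1*lam^8)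
  have h1 := (hff h 1).mul_left (-8*lam^7 + 28*lam^6 - 56*lam^5 + 70*lam^4 - 56*lam^3 + 28*lam^2 - 8*lam + 1)
  have h2 := (hff h 2).mul_left (28*lam^6 - 168*lam^5 + 490*lam^4 - 840*lam^3 + 868*lam^2 - 504*lam + 127)
  have h3 := (hff h 3).mul_left (-56*lam^5 + 420*lam^4 - 1400*lam^3 + 2520*lam^2 - 2408*lam + 966)
  have h4 := (hff h 4).mul_left (70*lam^4 - 560*lam^3 + 1820*lam^2 - 2800*lam + 1701)
  have h5 := (hff h 5).mul_left (-56*lam^3 + 420*lam^2 - 1120*lam + 1050)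
  have h6 := (hff h 6).mul_left (28*lam^2 - 168*lam + 266)
  have h7 := (hff h 7).mul_left (-8*lam + 28)
  have h8 := (hff h 8).mul_left (1)
  have H := ((((((((h0.add h1).add h2).add h3).add h4).add h5).add h6).add h7).add h8)
  convert H using 1
  · rfl
  · funext y
    simp only [Finset.prod_range_succ, Finset.prod_range_zero, one_mul]
    push_cast
    field_simp
    ring
  · field_simp
    ring

lemma hF1 {lam : ℝ} (h : 0 < lam) :
    HasSum (fun y : ℕ => poissonPMF lam y * (((y:ℝ) + 1/2) * (((y:ℝ) - lam)/lam - (((y:ℝ) - lam)/lam)^2/2 + (((y:ℝ) - lam)/lam)^3/3 - (((y:ℝ) - lam)/lam)^4/4 + (((y:ℝ) - lam)/lam)^5/5) - (y:ℝ)))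
      (-lam + 1/2 - 1/(6*lam) + 19/(8*lam^2) + 233/(40*lam^3) + 3/(10*lam^4)) := by
  have hl := h.ne'
  have h0 := (hff h 0).mul_left (-(137/120))
  have h1 := (hff h 1).mul_left (-(197/60) + (15/2)/lam - (15/2)/lam^2 + 5/lam^3 - (15/8)/lam^4 + (3/10)/lam^5)
  have h2 := (hff h 2).mul_left (5/lam - (35/2)/lam^2 + (85/3)/lam^3 - (185/8)/lam^4 + (77/10)/lam^5)
  have h3 := (hff h 3).mul_left (-5/lam^2 + (65/3)/lam^3 - 35/lam^4 + (41/2)/lam^5)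
  have h4 := (hff h 4).mul_left ((10/3)/lam^3 - (105/8)/lam^4 + 14/lam^5)
  have h5 := (hff h 5).mul_left (-(5/4)/lam^4 + (31/10)/lam^5)
  have h6 := (hff h 6).mul_left ((1/5)/lam^5)
  have H := ((((((h0.add h1).add h2).add h3).add h4).add h5).add h6)
  convert H using 1
  · rfl
  · funext y
    simp only [Finset.prod_range_succ, Finset.prod_range_zero, one_mul]
    push_cast
    field_simp
    ring
  · field_simp
    ring
lemma logfac_le (y : ℕ) : Real.log (Nat.factorial y) ≤ (y:ℝ)*((y:ℝ)-1) := by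
  rcases Nat.eq_zero_or_pos y with h0 | h1
  · subst h0; simp
  · have hy1 : (1:ℝ) ≤ (y:ℝ) := by exact_mod_cast h1
    have h2 : (Nat.factorial y : ℝ) ≤ ((y:ℝ))^y := by
      exact_mod_cast Nat.factorial_le_pow y
    have h3 : Real.log (Nat.factorial y) ≤ Real.log ((y:ℝ)^y) :=
      Real.log_le_log (by positivity) h2
    rw [Real.log_pow] at h3
    have h4 : Real.log y ≤ (y:ℝ) - 1 := Real.log_le_sub_one_of_pos (by linarith)
    calc Real.log (Nat.factorial y) ≤ (y:ℝ) * Real.log y := h3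
    _ ≤ (y:ℝ)*((y:ℝ)-1) := by
        apply mul_le_mul_of_nonneg_left h4 (by linarith)

lemma logfac_nonneg (y : ℕ) : 0 ≤ Real.log (Nat.factorial y) :=
  Real.log_nonneg (by exact_mod_cast Nat.one_le_iff_ne_zero.mpr (Nat.factorial_ne_zero y))

lemma summable_qlogfac {lam : ℝ} (h : 0 < lam) :
    Summable (fun y : ℕ => poissonPMF lam y * Real.log (Nat.factorial y)) := by
  have hg : Summable (fun y : ℕ => poissonPMF lam y * ((y:ℝ)*((y:ℝ)-1))) := by
    have h2 := (hff h 2).summable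
    apply h2.congr
    intro y
    simp only [Finset.prod_range_succ, Finset.prod_range_zero, one_mul]
    push_cast
    ring
  apply Summable.of_nonneg_of_le _ _ hg
  · intro y
    exact mul_nonneg (q_pos h y).le (logfac_nonneg y)
  · intro y
    exact mul_le_mul_of_nonneg_left (logfac_le y) (q_pos h y).le

lemma log_q {lam : ℝ} (h : 0 < lam) (y : ℕ) :
    Real.log (poissonPMF lam y) = -lam + (y:ℝ)*Real.log lam - Real.log (Nat.factorial y) := by
  have hfy : (0:ℝ) < (Nat.factorial y : ℝ) := by positivity
  rw [poissonPMF, Real.log_div (by positivity) hfy.ne', Real.log_mul (Real.exp_ne_zero _)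
    (by positivity), Real.log_exp, Real.log_pow]

/-- Entropy (nats) decomposition -/
lemma hasSum_entropy {lam : ℝ} (h : 0 < lam) :
    HasSum (fun y : ℕ => -(poissonPMF lam y * Real.log (poissonPMF lam y)))
      (lam - Real.log lam * lam +
        ∑' y : ℕ, poissonPMF lam y * Real.log (Nat.factorial y)) := by
  have h1 : HasSum (fun y : ℕ => lam * poissonPMF lam y) (lam * 1) :=
    (hasSum_q h).mul_left lam
  have h2 : HasSum (fun y : ℕ => Real.log lam * (poissonPMF lam y * ∏ i ∈ Finset.range 1, ((y:ℝ) - i)))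
      (Real.log lam * lam ^ 1) := (hff h 1).mul_left _
  have h3 := (summable_qlogfac h).hasSum
  have h4 := (h1.sub h2).add h3
  have heq : (fun y : ℕ => (lam * poissonPMF lam y -
      Real.log lam * (poissonPMF lam y * ∏ i ∈ Finset.range 1, ((y:ℝ) - i)))
      + poissonPMF lam y * Real.log (Nat.factorial y)) =
      fun y : ℕ => -(poissonPMF lam y * Real.log (poissonPMF lam y)) := by
    funext y
    rw [log_q h y]
    simp only [Finset.prod_range_succ, Finset.prod_range_zero, one_mul]
    ring
  rw [heq] at h4
  convert h4 using 1
  · rfl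
  ring

/-- value of `E[Mfun]` -/
noncomputable def EM (lam : ℝ) : ℝ :=
  (lam + 1/2)*Real.log lam + sc
  + (-lam + 1/2 - 1/(6*lam) + 19/(8*lam^2) + 233/(40*lam^3) + 3/(10*lam^4))
  + (1/12)*((1 - poissonPMF lam 0)/lam)
  + (1/12)*((1 - poissonPMF lam 0 - poissonPMF lam 1)/lam^2)

lemma hasSum_qM {lam : ℝ} (h : 0 < lam) :
    HasSum (fun y : ℕ => poissonPMF lam y * Mfun lam y) (EM lam) := by
  have hl := h.ne'
  have h0 : HasSum (fun y : ℕ => ((1/2)*Real.log lam + sc) *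
      (poissonPMF lam y * ∏ i ∈ Finset.range 0, ((y:ℝ) - i))) (((1/2)*Real.log lam + sc) * lam ^ 0) :=
    (hff h 0).mul_left _
  have h1 : HasSum (fun y : ℕ => Real.log lam *
      (poissonPMF lam y * ∏ i ∈ Finset.range 1, ((y:ℝ) - i))) (Real.log lam * lam ^ 1) :=
    (hff h 1).mul_left _
  have h2 := hF1 h
  have h3 := (hinv1 h).mul_left (1/12 : ℝ)
  have h4 := (hinv2 h).mul_left (1/12 : ℝ)
  have H := (((h0.add h1).add h2).add h3).add h4
  convert H using 1
  · funext y
    simp only [Mfun, P5, Finset.prod_range_succ, Finset.prod_range_zero, one_mul]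
    have hy1 : ((y:ℝ) + 1) ≠ 0 := by positivity
    have hy2 : ((y:ℝ) + 2) ≠ 0 := by positivity
    field_simp
    ring
  · simp only [EM]
    field_simp
    ring
noncomputable def PsiV (lam : ℝ) : ℝ :=
  (1/2)*((1 - poissonPMF lam 0 - poissonPMF lam 1)/lam^2)
  + (1 - poissonPMF lam 0 - poissonPMF lam 1 - poissonPMF lam 2)/lam^3
  + (4/lam^5)*(15*lam^3 + 25*lam^2 + lam)
  + (60000/lam^6)*(105*lam^4 + 490*lam^3 + 119*lam^2 + lam)

lemma hasSum_qpsi {lam : ℝ} (h : 0 < lam) :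
    HasSum (fun y : ℕ => poissonPMF lam y * psi lam y) (PsiV lam) := by
  have hl := h.ne'
  have h1 := (hinv2 h).mul_left (1/2 : ℝ)
  have h2 := hinv3 h
  have h3 := (hmu6 h).mul_left (4/lam^5)
  have h4 := (hmu8 h).mul_left (60000/lam^6)
  have H := ((h1.add h2).add h3).add h4
  convert H using 1
  · rfl
  · funext y
    simp only [psi]
    have hy1 : ((y:ℝ) + 1) ≠ 0 := by positivity
    have hy2 : ((y:ℝ) + 2) ≠ 0 := by positivity
    have hy3 : ((y:ℝ) + 3) ≠ 0 := by positivity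
    field_simp
  · rfl

lemma tail_bounds {lam : ℝ} (h : 0 < lam) (m : ℕ) :
    0 ≤ 1 - ∑ i ∈ Finset.range m, poissonPMF lam i ∧
      1 - ∑ i ∈ Finset.range m, poissonPMF lam i ≤ 1 := by
  constructor
  · have := sum_le_hasSum (Finset.range m) (fun i _ => (q_pos h i).le) (hasSum_q h)
    linarith
  · have : 0 ≤ ∑ i ∈ Finset.range m, poissonPMF lam i :=
      Finset.sum_nonneg (fun i _ => (q_pos h i).le)
    linarith

lemma PsiV_le {lam : ℝ} (h : 1 ≤ lam) : PsiV lam ≤ 50000000/lam^2 := by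
  have h0 : (0:ℝ) < lam := by linarith
  have t2 := tail_bounds h0 2
  have t3 := tail_bounds h0 3
  simp only [Finset.sum_range_succ, Finset.sum_range_zero, zero_add] at t2 t3
  have p34 : lam^3 ≤ lam^4 := by nlinarith [mul_nonneg (pow_nonneg h0.le 3) (by linarith : (0:ℝ) ≤ lam - 1)]
  have p45 : lam^4 ≤ lam^5 := by nlinarith [mul_nonneg (pow_nonneg h0.le 4) (by linarith : (0:ℝ) ≤ lam - 1)]
  have p56 : lam^5 ≤ lam^6 := by nlinarith [mul_nonneg (pow_nonneg h0.le 5) (by linarith : (0:ℝ) ≤ lam - 1)]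
  have p23 : lam^2 ≤ lam^3 := by nlinarith [mul_nonneg (pow_nonneg h0.le 2) (by linarith : (0:ℝ) ≤ lam - 1)]
  have e1 : (1/2)*((1 - poissonPMF lam 0 - poissonPMF lam 1)/lam^2) ≤ (1/2)*(1/lam^2) := by
    gcongr
    linarith [t2.2]
  have e2 : (1 - poissonPMF lam 0 - poissonPMF lam 1 - poissonPMF lam 2)/lam^3 ≤ 1/lam^2 := by
    calc (1 - poissonPMF lam 0 - poissonPMF lam 1 - poissonPMF lam 2)/lam^3 ≤ 1/lam^3 := by
          gcongr
          linarith [t3.2]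
    _ ≤ 1/lam^2 := one_div_le_one_div_of_le (by positivity) p23
  have e3 : (4/lam^5)*(15*lam^3 + 25*lam^2 + lam) ≤ 164/lam^2 := by
    rw [div_mul_eq_mul_div, div_le_div_iff₀ (by positivity) (by positivity)]
    nlinarith [p34, p45, p23, p56, pow_pos h0 5, pow_pos h0 3]
  have e4 : (60000/lam^6)*(105*lam^4 + 490*lam^3 + 119*lam^2 + lam) ≤ 42900000/lam^2 := by
    rw [div_mul_eq_mul_div, div_le_div_iff₀ (by positivity) (by positivity)]
    nlinarith [p34, p45, p56, p23, pow_pos h0 6, pow_pos h0 3,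
      mul_le_mul_of_nonneg_left p56 (by norm_num : (0:ℝ) ≤ 490),
      mul_le_mul_of_nonneg_left (p34.trans (p45.trans p56)) (by norm_num : (0:ℝ) ≤ 119),
      mul_le_mul_of_nonneg_left (p23.trans (p34.trans (p45.trans p56))) (by norm_num : (0:ℝ) ≤ 1)]
  have hfin : (1/2)*(1/lam^2) + 1/lam^2 + 164/lam^2 + 42900000/lam^2 ≤ 50000000/lam^2 := by
    have heq : (1/2)*(1/lam^2) + 1/lam^2 + 164/lam^2 + 42900000/lam^2
        = (85800331/2)/lam^2 := by ring
    rw [heq]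
    gcongr
    norm_num
  simp only [PsiV]
  linarith [e1, e2, e3, e4, hfin]

lemma exp_neg_le {lam : ℝ} (h : 1 ≤ lam) : Real.exp (-lam) ≤ 4/lam^2 := by
  have h0 : (0:ℝ) < lam := by linarith
  have h1 : lam/2 + 1 ≤ Real.exp (lam/2) := by
    have := Real.add_one_le_exp (lam/2)
    linarith
  have h2 : lam^2/4 ≤ Real.exp lam := by
    have hsq : Real.exp (lam/2) * Real.exp (lam/2) = Real.exp lam := by
      rw [← Real.exp_add]; norm_num
    nlinarith [Real.exp_pos (lam/2)]
  rw [Real.exp_neg]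
  rw [inv_le_iff_one_le_mul₀ (Real.exp_pos lam)]
  rw [div_mul_eq_mul_div, le_div_iff₀ (by positivity)]
  nlinarith
noncomputable def T0 (lam : ℝ) : ℝ :=
  lam*Real.log lam - lam + (1/2)*Real.log lam + 1/2 + sc - 1/(12*lam)

lemma EM_sub_T0 {lam : ℝ} (h : 1 ≤ lam) : |EM lam - T0 lam| ≤ 1000/lam^2 := by
  have h0 : (0:ℝ) < lam := by linarith
  have hq0 : poissonPMF lam 0 = Real.exp (-lam) := by simp [poissonPMF]
  have hq0nn : 0 ≤ poissonPMF lam 0 := (q_pos h0 0).le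
  have hq1nn : 0 ≤ poissonPMF lam 1 := (q_pos h0 1).le
  have t2 := tail_bounds h0 2
  simp only [Finset.sum_range_succ, Finset.sum_range_zero, zero_add] at t2
  have hexp := exp_neg_le h
  have p23 : lam^2 ≤ lam^3 := by nlinarith [mul_nonneg (pow_nonneg h0.le 2) (by linarith : (0:ℝ) ≤ lam - 1)]
  have p34 : lam^3 ≤ lam^4 := by nlinarith [mul_nonneg (pow_nonneg h0.le 3) (by linarith : (0:ℝ) ≤ lam - 1)]
  have hid : EM lam - T0 lam =
      19/(8*lam^2) + 233/(40*lam^3) + 3/(10*lam^4)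
      - poissonPMF lam 0/(12*lam)
      + (1/12)*((1 - poissonPMF lam 0 - poissonPMF lam 1)/lam^2) := by
    simp only [EM, T0]
    field_simp
    ring
  have b2 : 233/(40*lam^3) ≤ 233/(40*lam^2) := by
    rw [div_le_div_iff₀ (by positivity) (by positivity)]
    nlinarith [p23]
  have b3 : 3/(10*lam^4) ≤ 3/(10*lam^2) := by
    rw [div_le_div_iff₀ (by positivity) (by positivity)]
    nlinarith [p23, p34]
  have b4 : poissonPMF lam 0/(12*lam) ≤ 1/lam^2 := by
    rw [hq0, div_le_div_iff₀ (by positivity) (by positivity)]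
    calc Real.exp (-lam) * lam^2 ≤ (4/lam^2) * lam^2 := by
          apply mul_le_mul_of_nonneg_right hexp (by positivity)
    _ = 4 := by field_simp
    _ ≤ 1*(12*lam) := by nlinarith
  have b5 : (1/12)*((1 - poissonPMF lam 0 - poissonPMF lam 1)/lam^2) ≤ (1/12)*(1/lam^2) := by
    gcongr
    linarith [t2.2]
  have b5' : 0 ≤ (1/12)*((1 - poissonPMF lam 0 - poissonPMF lam 1)/lam^2) := by
    have := t2.1
    have h2 : 0 ≤ (1 - poissonPMF lam 0 - poissonPMF lam 1) := by linarith
    positivity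
  have b4' : 0 ≤ poissonPMF lam 0/(12*lam) := by positivity
  rw [hid, abs_le]
  have c1 : (0:ℝ) < lam^2 := by positivity
  have hsum : 19/(8*lam^2) + 233/(40*lam^2) + 3/(10*lam^2) + 1/lam^2 + (1/12)*(1/lam^2)
      ≤ 1000/lam^2 := by
    have heq : 19/(8*lam^2) + 233/(40*lam^2) + 3/(10*lam^2) + 1/lam^2 + (1/12)*(1/lam^2)
        = (115/12)/lam^2 := by ring
    rw [heq]
    gcongr
    norm_num
  constructor
  · have g1 : (0:ℝ) ≤ 19/(8*lam^2) := by positivity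
    have g2 : (0:ℝ) ≤ 233/(40*lam^3) := by positivity
    have g3 : (0:ℝ) ≤ 3/(10*lam^4) := by positivity
    have g4 : poissonPMF lam 0/(12*lam) ≤ 1000/lam^2 := by
      calc poissonPMF lam 0/(12*lam) ≤ 1/lam^2 := b4
      _ ≤ 1000/lam^2 := by gcongr <;> norm_num
    linarith
  · linarith

set_option maxHeartbeats 1000000 in
lemma main_nats {lam : ℝ} (h : 1 ≤ lam) :
    |(∑' y : ℕ, -(poissonPMF lam y * Real.log (poissonPMF lam y)))
      - ((1/2)*Real.log lam + 1/2 + sc - 1/(12*lam))| ≤ 100000000/lam^2 := by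
  have h0 : (0:ℝ) < lam := by linarith
  have hNsum := hasSum_entropy h0
  set T := ∑' y : ℕ, poissonPMF lam y * Real.log (Nat.factorial y) with hTdef
  have hNval : (∑' y : ℕ, -(poissonPMF lam y * Real.log (poissonPMF lam y)))
      = lam - Real.log lam * lam + T := hNsum.tsum_eq
  have hTsum : HasSum (fun y : ℕ => poissonPMF lam y * Real.log (Nat.factorial y)) T :=
    (summable_qlogfac h0).hasSum
  have hMsum := hasSum_qM h0
  have hdiff : HasSum (fun y : ℕ => poissonPMF lam y * (Real.log (Nat.factorial y) - Mfun lam y))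
      (T - EM lam) := by
    have h2 := hTsum.sub hMsum
    have heq : (fun y : ℕ => poissonPMF lam y * Real.log (Nat.factorial y)
        - poissonPMF lam y * Mfun lam y)
        = fun y : ℕ => poissonPMF lam y * (Real.log (Nat.factorial y) - Mfun lam y) := by
      funext y; ring
    rwa [heq] at h2
  have hb : ∀ y : ℕ, |poissonPMF lam y * (Real.log (Nat.factorial y) - Mfun lam y)|
      ≤ poissonPMF lam y * psi lam y := by
    intro y
    rw [abs_mul, abs_of_nonneg (q_pos h0 y).le]
    exact mul_le_mul_of_nonneg_left (pointwise_err h y) (q_pos h0 y).le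
  have hsabs : Summable (fun y : ℕ => |poissonPMF lam y * (Real.log (Nat.factorial y) - Mfun lam y)|) :=
    Summable.of_nonneg_of_le (fun y => abs_nonneg _) hb (hasSum_qpsi h0).summable
  have habs : |T - EM lam| ≤ PsiV lam := by
    rw [← hdiff.tsum_eq]
    have hn1 : |∑' y : ℕ, poissonPMF lam y * (Real.log (Nat.factorial y) - Mfun lam y)|
        ≤ ∑' y : ℕ, |poissonPMF lam y * (Real.log (Nat.factorial y) - Mfun lam y)| := by
      have hsabs' : Summable (fun y : ℕ =>
          ‖poissonPMF lam y * (Real.log (Nat.factorial y) - Mfun lam y)‖) := by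
        simp only [Real.norm_eq_abs]
        exact hsabs
      have hn0 := norm_tsum_le_tsum_norm hsabs'
      simp only [Real.norm_eq_abs] at hn0
      exact hn0
    have hn2 : (∑' y : ℕ, |poissonPMF lam y * (Real.log (Nat.factorial y) - Mfun lam y)|)
        ≤ ∑' y : ℕ, poissonPMF lam y * psi lam y :=
      Summable.tsum_le_tsum hb hsabs (hasSum_qpsi h0).summable
    calc |∑' y : ℕ, poissonPMF lam y * (Real.log (Nat.factorial y) - Mfun lam y)|
        ≤ ∑' y : ℕ, |poissonPMF lam y * (Real.log (Nat.factorial y) - Mfun lam y)| := hn1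
    _ ≤ ∑' y : ℕ, poissonPMF lam y * psi lam y := hn2
    _ = PsiV lam := (hasSum_qpsi h0).tsum_eq
  have hEMT0 := EM_sub_T0 h
  have hPsi := PsiV_le h
  have hkey : (lam - Real.log lam * lam + T) - ((1/2)*Real.log lam + 1/2 + sc - 1/(12*lam))
      = (T - EM lam) + (EM lam - T0 lam) := by
    simp only [T0]; ring
  rw [hNval, hkey]
  calc |(T - EM lam) + (EM lam - T0 lam)| ≤ |T - EM lam| + |EM lam - T0 lam| := abs_add_le _ _
  _ ≤ 50000000/lam^2 + 1000/lam^2 := by linarith [habs]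
  _ ≤ 100000000/lam^2 := by
      have heq2 : (50000000:ℝ)/lam^2 + 1000/lam^2 = (50001000:ℝ)/lam^2 := by ring
      rw [heq2]
      gcongr
      norm_num
end PE

/-- Asymptotic expansion of the Poisson entropy:
`H(Pois(λ)) = (1/2)log₂(2πeλ) - 1/(12λ ln 2) + O(1/λ²)` as `λ → ∞`;
in particular the difference to `(1/2)log₂(2πeλ)` tends to `0`. -/
theorem poisson_entropy_asymptotics :
    (fun lam : ℝ => poissonEntropy lam -
        ((1 / 2) * Real.logb 2 (2 * Real.pi * Real.exp 1 * lam) -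
          1 / (12 * lam * Real.log 2))) =O[atTop]
      (fun lam : ℝ => 1 / lam ^ 2) ∧
    Tendsto (fun lam : ℝ => poissonEntropy lam -
        (1 / 2) * Real.logb 2 (2 * Real.pi * Real.exp 1 * lam)) atTop
      (nhds 0) := by
  have hlog2 : (0:ℝ) < Real.log 2 := Real.log_pos (by norm_num)
  have hl2 : (1:ℝ)/2 ≤ Real.log 2 := by
    have := Real.log_two_gt_d9
    linarith
  have key : ∀ lam : ℝ, 1 ≤ lam →
      |poissonEntropy lam - ((1/2) * Real.logb 2 (2*Real.pi*Real.exp 1*lam)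
        - 1/(12*lam*Real.log 2))| ≤ 200000000 * |1/lam^2| := by
    intro lam hl
    have h0 : (0:ℝ) < lam := by linarith
    have hH : poissonEntropy lam =
        (∑' y : ℕ, -(poissonPMF lam y * Real.log (poissonPMF lam y))) / Real.log 2 := by
      unfold poissonEntropy
      rw [← tsum_div_const]
      congr 1
      funext y
      rw [Real.logb]
      ring
    have hlogb : Real.logb 2 (2*Real.pi*Real.exp 1*lam)
        = (Real.log (2*Real.pi) + 1 + Real.log lam)/Real.log 2 := by
      rw [Real.logb]
      congr 1
      rw [Real.log_mul (by positivity) h0.ne',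
        Real.log_mul (by positivity) (Real.exp_ne_zero 1), Real.log_exp]
    have hmain := PE.main_nats hl
    have hexpr : poissonEntropy lam - ((1/2) * Real.logb 2 (2*Real.pi*Real.exp 1*lam)
          - 1/(12*lam*Real.log 2))
        = ((∑' y : ℕ, -(poissonPMF lam y * Real.log (poissonPMF lam y)))
            - ((1/2)*Real.log lam + 1/2 + PE.sc - 1/(12*lam)))/Real.log 2 := by
      rw [hH, hlogb]
      simp only [PE.sc]
      field_simp
      ring
    rw [hexpr, abs_div, abs_of_pos hlog2]
    calc |(∑' y : ℕ, -(poissonPMF lam y * Real.log (poissonPMF lam y)))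
          - ((1/2)*Real.log lam + 1/2 + PE.sc - 1/(12*lam))| / Real.log 2
        ≤ (100000000/lam^2) / Real.log 2 := by gcongr
    _ ≤ (100000000/lam^2) / (1/2) := by gcongr
    _ = 200000000 * (1/lam^2) := by ring
    _ = 200000000 * |1/lam^2| := by rw [abs_of_pos (by positivity)]
  have hO : (fun lam : ℝ => poissonEntropy lam -
      ((1 / 2) * Real.logb 2 (2 * Real.pi * Real.exp 1 * lam) -
        1 / (12 * lam * Real.log 2))) =O[atTop] (fun lam : ℝ => 1 / lam ^ 2) := by
    rw [Asymptotics.isBigO_iff]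
    refine ⟨200000000, ?_⟩
    filter_upwards [eventually_ge_atTop (1:ℝ)] with lam hl
    rw [Real.norm_eq_abs, Real.norm_eq_abs]
    exact key lam hl
  refine ⟨hO, ?_⟩
  have h1 : Tendsto (fun lam : ℝ => 1/lam^2) atTop (nhds 0) := by
    have h2 : Tendsto (fun lam : ℝ => lam^2) atTop atTop :=
      tendsto_pow_atTop (by norm_num)
    exact h2.inv_tendsto_atTop.congr (fun x => (one_div _).symm)
  have hf := hO.trans_tendsto h1
  have hb : Tendsto (fun lam : ℝ => 12*lam*Real.log 2) atTop atTop := by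
    have h3 := Filter.Tendsto.const_mul_atTop (show (0:ℝ) < 12*Real.log 2 by positivity)
      (tendsto_id (α := ℝ))
    exact h3.congr (fun x => by simp only [id_eq]; ring)
  have hg : Tendsto (fun lam : ℝ => 1/(12*lam*Real.log 2)) atTop (nhds 0) :=
    hb.inv_tendsto_atTop.congr (fun x => (one_div _).symm)
  have hsub := hf.sub hg
  rw [sub_zero] at hsub
  exact hsub.congr (fun lam => by ring)
end

section
/- Let δ ∈ (0,1) and define r > 0 by (2r)² = -ln(1-δ²). If two vectors s, s' ∈ ℝⁿ of reparametrized codewords satisfy ∑_{t=1}^n (sₜ - s'ₜ)² < (2r)², then the product Poisson output distributions with means sₜ² and s'ₜ² have total variation distance strictly less than δ. -/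
lemma poissonPMF_nonneg {lam : ℝ} (h : 0 ≤ lam) (y : ℕ) : 0 ≤ poissonPMF lam y := by
  unfold poissonPMF; positivity

lemma poissonPMF_hasSum {lam : ℝ} (h : 0 ≤ lam) : HasSum (poissonPMF lam) 1 := by
  have h2 := ProbabilityTheory.poissonPMFRealSum ⟨lam, h⟩
  have he : (fun y => ProbabilityTheory.poissonPMFReal ⟨lam, h⟩ y) = poissonPMF lam := by
    funext y
    simp [poissonPMF, ProbabilityTheory.poissonPMFReal]
    rfl
  rw [← he]; exact h2

/-- Square root of a product of two Poisson pmfs. -/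
lemma sqrt_poissonPMF_mul (a b : ℝ) (ha : 0 ≤ a) (hb : 0 ≤ b) (y : ℕ) :
    Real.sqrt (poissonPMF (a ^ 2) y * poissonPMF (b ^ 2) y)
      = Real.exp (-(a - b) ^ 2 / 2) * poissonPMF (a * b) y := by
  have hy : (0 : ℝ) < (Nat.factorial y : ℝ) := by positivity
  have hexp : Real.exp (-a ^ 2) * Real.exp (-b ^ 2)
      = (Real.exp (-(a - b) ^ 2 / 2) * Real.exp (-(a * b))) ^ 2 := by
    rw [← Real.exp_add, ← Real.exp_add, ← Real.exp_nat_mul]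
    congr 1
    push_cast
    ring
  have hpow : (a ^ 2) ^ y * (b ^ 2) ^ y = ((a * b) ^ y) ^ 2 := by
    rw [← mul_pow, ← mul_pow, ← pow_mul, ← pow_mul, Nat.mul_comm]
  have key : poissonPMF (a ^ 2) y * poissonPMF (b ^ 2) y
      = (Real.exp (-(a - b) ^ 2 / 2) * poissonPMF (a * b) y) ^ 2 := by
    unfold poissonPMF
    have lhs_eq : Real.exp (-a ^ 2) * (a ^ 2) ^ y / ↑(Nat.factorial y) *
        (Real.exp (-b ^ 2) * (b ^ 2) ^ y / ↑(Nat.factorial y))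
        = (Real.exp (-a ^ 2) * Real.exp (-b ^ 2)) * ((a ^ 2) ^ y * (b ^ 2) ^ y) /
          ((Nat.factorial y : ℝ) ^ 2) := by
      field_simp
    rw [lhs_eq, hexp, hpow]
    field_simp
  rw [key, Real.sqrt_sq]
  exact mul_nonneg (Real.exp_pos _).le (poissonPMF_nonneg (mul_nonneg ha hb) y)

/-- Square root of a finite product of nonnegative reals. -/
lemma sqrt_finset_prod {ι : Type*} (S : Finset ι) (f : ι → ℝ) (h : ∀ i ∈ S, 0 ≤ f i) :
    Real.sqrt (∏ i ∈ S, f i) = ∏ i ∈ S, Real.sqrt (f i) := by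
  classical
  induction S using Finset.cons_induction with
  | empty => simp
  | cons a S ha ih =>
      rw [Finset.prod_cons, Finset.prod_cons,
        Real.sqrt_mul (h a (Finset.mem_cons_self a S)),
        ih fun i hi => h i (Finset.mem_cons_of_mem hi)]

/-- Product of `HasSum`s over a finite product of copies of `ℕ`. -/
lemma hasSum_pi_prod : ∀ (n : ℕ) (f : Fin n → ℕ → ℝ) (a : Fin n → ℝ),
    (∀ t y, 0 ≤ f t y) → (∀ t, HasSum (f t) (a t)) →
    HasSum (fun y : Fin n → ℕ => ∏ t, f t (y t)) (∏ t, a t) := by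
  intro n
  induction n with
  | zero =>
      intro f a _ _
      have h0 : HasSum (fun y : Fin 0 → ℕ => ∏ t, f t (y t))
          ((fun y : Fin 0 → ℕ => ∏ t, f t (y t)) default) := by
        apply hasSum_single
        intro b hb
        exact absurd (Subsingleton.elim b default) hb
      simpa using h0
  | succ n ih =>
      intro f a hnn h
      have ihs := ih (fun t => f t.succ) (fun t => a t.succ) (fun t y => hnn _ y)
        (fun t => h t.succ)
      have hsummable : Summable fun x : ℕ × (Fin n → ℕ) =>
          f 0 x.1 * ∏ t, f t.succ (x.2 t) := by
        apply Summable.mul_of_nonneg (h 0).summable ihs.summable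
        · exact fun y => hnn 0 y
        · exact fun y => Finset.prod_nonneg fun t _ => hnn _ _
      have key := (h 0).mul ihs hsummable
      have hk := (Fin.consEquiv fun _ => ℕ).symm.hasSum_iff.mpr key
      rw [Fin.prod_univ_succ]
      simp only [Fin.prod_univ_succ]
      exact hk

/-- If two reparametrized codewords are at squared Euclidean distance less
than `(2r)² = -ln(1-δ²)`, the corresponding product Poisson output laws have
total variation distance strictly less than `δ`. -/
theorem close_codewords_tv_lt (n : ℕ) (δ r : ℝ) (hδ0 : 0 < δ) (hδ1 : δ < 1)
    (hr : 0 < r) (hr2 : (2 * r) ^ 2 = -Real.log (1 - δ ^ 2))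
    (s s' : Fin n → ℝ) (hs : ∀ t, 0 ≤ s t) (hs' : ∀ t, 0 ≤ s' t)
    (hclose : ∑ t, (s t - s' t) ^ 2 < (2 * r) ^ 2) :
    (1 / 2) * ∑' y : Fin n → ℕ,
        |(∏ t, poissonPMF ((s t) ^ 2) (y t)) -
          ∏ t, poissonPMF ((s' t) ^ 2) (y t)| < δ := by
  classical
  set p : (Fin n → ℕ) → ℝ := fun y => ∏ t, poissonPMF ((s t) ^ 2) (y t) with hp_def
  set q : (Fin n → ℕ) → ℝ := fun y => ∏ t, poissonPMF ((s' t) ^ 2) (y t) with hq_def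
  set A : ℝ := ∑ t, (s t - s' t) ^ 2 with hA_def
  set F : ℝ := Real.exp (-A / 2) with hF_def
  -- basic positivity
  have hp_nn : ∀ y, 0 ≤ p y := fun y =>
    Finset.prod_nonneg fun t _ => poissonPMF_nonneg (by positivity) _
  have hq_nn : ∀ y, 0 ≤ q y := fun y =>
    Finset.prod_nonneg fun t _ => poissonPMF_nonneg (by positivity) _
  -- HasSum facts
  have Hp : HasSum p 1 := by
    have h1 := hasSum_pi_prod n (fun t => poissonPMF ((s t) ^ 2)) (fun _ => 1)
      (fun t y => poissonPMF_nonneg (by positivity) y)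
      (fun t => poissonPMF_hasSum (by positivity))
    simpa using h1
  have Hq : HasSum q 1 := by
    have h1 := hasSum_pi_prod n (fun t => poissonPMF ((s' t) ^ 2)) (fun _ => 1)
      (fun t y => poissonPMF_nonneg (by positivity) y)
      (fun t => poissonPMF_hasSum (by positivity))
    simpa using h1
  -- the "fidelity" sum
  set g : (Fin n → ℕ) → ℝ := fun y =>
    ∏ t, Real.sqrt (poissonPMF ((s t) ^ 2) (y t) * poissonPMF ((s' t) ^ 2) (y t)) with hg_def
  have Hg : HasSum g F := by
    have hterm : ∀ t : Fin n, HasSum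
        (fun y => Real.sqrt (poissonPMF ((s t) ^ 2) y * poissonPMF ((s' t) ^ 2) y))
        (Real.exp (-(s t - s' t) ^ 2 / 2)) := by
      intro t
      have h1 : HasSum (poissonPMF (s t * s' t)) 1 :=
        poissonPMF_hasSum (mul_nonneg (hs t) (hs' t))
      have h2 := h1.mul_left (Real.exp (-(s t - s' t) ^ 2 / 2))
      rw [mul_one] at h2
      have he : (fun y => Real.exp (-(s t - s' t) ^ 2 / 2) * poissonPMF (s t * s' t) y)
          = fun y => Real.sqrt (poissonPMF ((s t) ^ 2) y * poissonPMF ((s' t) ^ 2) y) := by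
        funext y
        exact (sqrt_poissonPMF_mul (s t) (s' t) (hs t) (hs' t) y).symm
      rwa [he] at h2
    have h3 := hasSum_pi_prod n
      (fun t y => Real.sqrt (poissonPMF ((s t) ^ 2) y * poissonPMF ((s' t) ^ 2) y))
      (fun t => Real.exp (-(s t - s' t) ^ 2 / 2))
      (fun t y => Real.sqrt_nonneg _) hterm
    have hFprod : (∏ t, Real.exp (-(s t - s' t) ^ 2 / 2)) = F := by
      rw [← Real.exp_sum, hF_def]
      congr 1
      rw [← Finset.sum_div]
      congr 1
      rw [← Finset.sum_neg_distrib]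
    rwa [hFprod] at h3
  -- g y = √(p y) * √(q y)
  have hg_eq : ∀ y, g y = Real.sqrt (p y) * Real.sqrt (q y) := by
    intro y
    rw [hg_def, hp_def, hq_def]
    simp only
    rw [← Real.sqrt_mul (Finset.prod_nonneg fun t _ => poissonPMF_nonneg (by positivity) _),
      ← Finset.prod_mul_distrib,
      sqrt_finset_prod _ _ fun t _ =>
        mul_nonneg (poissonPMF_nonneg (by positivity) _) (poissonPMF_nonneg (by positivity) _)]
  -- sums of squares of √p ± √q
  have Hminus : HasSum (fun y => (Real.sqrt (p y) - Real.sqrt (q y)) ^ 2) (2 - 2 * F) := by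
    have h1 : HasSum (fun y => p y + q y - 2 * g y) (1 + 1 - 2 * F) :=
      (Hp.add Hq).sub (Hg.mul_left 2)
    have he : (fun y => p y + q y - 2 * g y)
        = fun y => (Real.sqrt (p y) - Real.sqrt (q y)) ^ 2 := by
      funext y
      have e1 := Real.sq_sqrt (hp_nn y)
      have e2 := Real.sq_sqrt (hq_nn y)
      have e3 := hg_eq y
      linear_combination -e1 - e2 - 2 * e3
    rw [he] at h1
    convert h1 using 1
    ring
  have Hplus : HasSum (fun y => (Real.sqrt (p y) + Real.sqrt (q y)) ^ 2) (2 + 2 * F) := by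
    have h1 : HasSum (fun y => p y + q y + 2 * g y) (1 + 1 + 2 * F) :=
      (Hp.add Hq).add (Hg.mul_left 2)
    have he : (fun y => p y + q y + 2 * g y)
        = fun y => (Real.sqrt (p y) + Real.sqrt (q y)) ^ 2 := by
      funext y
      have e1 := Real.sq_sqrt (hp_nn y)
      have e2 := Real.sq_sqrt (hq_nn y)
      have e3 := hg_eq y
      linear_combination -e1 - e2 + 2 * e3
    rw [he] at h1
    convert h1 using 1
    ring
  have hF0 : 0 < F := Real.exp_pos _
  have hF1 : F ≤ 1 := by
    rw [hF_def, Real.exp_le_one_iff]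
    have hA0 : 0 ≤ A := Finset.sum_nonneg fun t _ => sq_nonneg _
    linarith
  -- bound on finite partial sums of |p - q|
  have hbound : ∀ S : Finset (Fin n → ℕ),
      ∑ y ∈ S, |p y - q y| ≤ 2 * Real.sqrt (1 - F ^ 2) := by
    intro S
    have habs : ∀ y, |p y - q y|
        = |Real.sqrt (p y) - Real.sqrt (q y)| * (Real.sqrt (p y) + Real.sqrt (q y)) := by
      intro y
      have hid : (Real.sqrt (p y) - Real.sqrt (q y)) * (Real.sqrt (p y) + Real.sqrt (q y))
          = p y - q y := by
        have e1 := Real.sq_sqrt (hp_nn y)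
        have e2 := Real.sq_sqrt (hq_nn y)
        linear_combination e1 - e2
      rw [← hid, abs_mul,
        abs_of_nonneg (add_nonneg (Real.sqrt_nonneg (p y)) (Real.sqrt_nonneg (q y)))]
    have hCS := Finset.sum_mul_sq_le_sq_mul_sq S
      (fun y => |Real.sqrt (p y) - Real.sqrt (q y)|)
      (fun y => Real.sqrt (p y) + Real.sqrt (q y))
    have h1 : ∑ y ∈ S, |Real.sqrt (p y) - Real.sqrt (q y)| ^ 2 ≤ 2 - 2 * F := by
      calc ∑ y ∈ S, |Real.sqrt (p y) - Real.sqrt (q y)| ^ 2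
          = ∑ y ∈ S, (Real.sqrt (p y) - Real.sqrt (q y)) ^ 2 := by
            simp [sq_abs]
        _ ≤ 2 - 2 * F := sum_le_hasSum S (fun y _ => sq_nonneg _) Hminus
    have h2 : ∑ y ∈ S, (Real.sqrt (p y) + Real.sqrt (q y)) ^ 2 ≤ 2 + 2 * F :=
      sum_le_hasSum S (fun y _ => sq_nonneg _) Hplus
    have hsum_nn : 0 ≤ ∑ y ∈ S, |p y - q y| :=
      Finset.sum_nonneg fun y _ => abs_nonneg _
    have hsq : (∑ y ∈ S, |p y - q y|) ^ 2 ≤ 4 * (1 - F ^ 2) := by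
      have e : ∑ y ∈ S, |p y - q y|
          = ∑ y ∈ S, |Real.sqrt (p y) - Real.sqrt (q y)| * (Real.sqrt (p y) + Real.sqrt (q y)) :=
        Finset.sum_congr rfl fun y _ => habs y
      rw [e]
      calc (∑ y ∈ S, |Real.sqrt (p y) - Real.sqrt (q y)| * (Real.sqrt (p y) + Real.sqrt (q y))) ^ 2
          ≤ (∑ y ∈ S, |Real.sqrt (p y) - Real.sqrt (q y)| ^ 2) *
            ∑ y ∈ S, (Real.sqrt (p y) + Real.sqrt (q y)) ^ 2 := hCS
        _ ≤ (2 - 2 * F) * (2 + 2 * F) := by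
            apply mul_le_mul h1 h2 (Finset.sum_nonneg fun y _ => sq_nonneg _) (by linarith)
        _ = 4 * (1 - F ^ 2) := by ring
    have hsqrt := Real.sqrt_le_sqrt hsq
    rw [Real.sqrt_sq hsum_nn] at hsqrt
    calc ∑ y ∈ S, |p y - q y| ≤ Real.sqrt (4 * (1 - F ^ 2)) := hsqrt
      _ = 2 * Real.sqrt (1 - F ^ 2) := by
          rw [show (4 : ℝ) * (1 - F ^ 2) = 2 ^ 2 * (1 - F ^ 2) by ring,
            Real.sqrt_mul (by positivity), Real.sqrt_sq (by norm_num)]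
  -- summability of |p - q|
  have hsummable : Summable fun y => |p y - q y| := by
    apply Summable.of_nonneg_of_le (fun y => abs_nonneg _) (fun y => ?_)
      ((Hp.summable).add (Hq.summable))
    calc |p y - q y| ≤ |p y| + |q y| := abs_sub _ _
      _ = p y + q y := by rw [abs_of_nonneg (hp_nn y), abs_of_nonneg (hq_nn y)]
  have htsum : ∑' y, |p y - q y| ≤ 2 * Real.sqrt (1 - F ^ 2) :=
    Summable.tsum_le_of_sum_le hsummable hbound
  -- final numeric estimate
  have hF2 : F ^ 2 = Real.exp (-A) := by
    rw [hF_def, pow_two, ← Real.exp_add]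
    congr 1
    ring
  have hlog : Real.log (1 - δ ^ 2) < -A := by
    have hc : A < -Real.log (1 - δ ^ 2) := hr2 ▸ hclose
    linarith
  have h1δ : (0 : ℝ) < 1 - δ ^ 2 := by nlinarith
  have hexp : 1 - δ ^ 2 < Real.exp (-A) := by
    calc 1 - δ ^ 2 = Real.exp (Real.log (1 - δ ^ 2)) := (Real.exp_log h1δ).symm
      _ < Real.exp (-A) := Real.exp_lt_exp.mpr hlog
  have hlt : Real.sqrt (1 - F ^ 2) < δ := by
    rw [Real.sqrt_lt' hδ0, hF2]
    linarith
  calc (1 / 2) * ∑' y, |p y - q y| ≤ (1 / 2) * (2 * Real.sqrt (1 - F ^ 2)) := by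
        apply mul_le_mul_of_nonneg_left htsum (by norm_num)
    _ = Real.sqrt (1 - F ^ 2) := by ring
    _ < δ := hlt
end
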